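/- arXiv:2511.12465 — 2 statements merged into one kernel-verified Lean document; each statement's English description precedes it below -/
import Mathlib

section
/- Let γ ∈ SL(2,ℝ) be elliptic with fixed point z₀ ∈ ℍ, such that γ generates a cyclic group of order 2m (m ≥ 1) and γ ≠ ±I. Then for any z ∈ ℍ with d(z, z₀) > δ > 0, one has cosh d(z, γz) > 1 + (δ/m)². -/
open UpperHalfPlane

local notation "SL2R" => Matrix.SpecialLinearGroup (Fin 2) ℝ

lemma aux_coe_smul_SL (g : SL2R) (z : ℍ) :
    ((g • z : ℍ) : ℂ) = ((g 0 0 : ℂ) * z + (g 0 1 : ℂ)) / ((g 1 0 : ℂ) * z + (g 1 1 : ℂ)) := by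
  rw [UpperHalfPlane.specialLinearGroup_apply]
  simp

lemma aux_denom_ne_zero (g : SL2R) (z : ℍ) : ((g 1 0 : ℂ) * z + (g 1 1 : ℂ)) ≠ 0 := by
  have h : ![g 1 0, g 1 1] ≠ 0 := by
    intro h
    have h0 : g 1 0 = 0 := by simpa using congrFun h 0
    have h1 : g 1 1 = 0 := by simpa using congrFun h 1
    have hd := g.2
    rw [Matrix.det_fin_two] at hd
    rw [show (g : Matrix (Fin 2) (Fin 2) ℝ) 1 0 = g 1 0 from rfl,
      show (g : Matrix (Fin 2) (Fin 2) ℝ) 1 1 = g 1 1 from rfl, h0, h1] at hd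
    simp at hd
  simpa using UpperHalfPlane.linear_ne_zero (cd := ![g 1 0, g 1 1]) z h

lemma aux_stab_I (k : SL2R) (hk : k • UpperHalfPlane.I = UpperHalfPlane.I) :
    k 1 1 = k 0 0 ∧ k 0 1 = -(k 1 0) := by
  have h := congrArg (UpperHalfPlane.coe) hk
  rw [aux_coe_smul_SL] at h
  have hd := aux_denom_ne_zero k UpperHalfPlane.I
  have hI : ((UpperHalfPlane.I : ℍ) : ℂ) = Complex.I := rfl
  rw [hI] at h hd
  rw [div_eq_iff hd] at h
  constructor
  · have := congrArg Complex.im h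
    simp at this
    linarith
  · have := congrArg Complex.re h
    simp at this
    linarith

section
open Real
lemma aux_im_bound (m : ℕ) (ζ : ℂ) (habs : ‖ζ‖ = 1)
    (hpow : ζ ^ (2 * m) = 1) (h1 : ζ ≠ 1) (hneg1 : ζ ≠ -1) :
    1 / (m : ℝ) ≤ |ζ.im| := by
  rcases Nat.eq_zero_or_pos m with hm0 | hm0
  · simp [hm0]
  have hmR : (0 : ℝ) < m := by exact_mod_cast hm0
  have hζ0 : ζ ≠ 0 := by
    intro h; rw [h] at habs; simp at habs
  set θ := Complex.arg ζ with hθdef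
  have hexp : ζ = Complex.exp (θ * Complex.I) := by
    conv_lhs => rw [← Complex.norm_mul_exp_arg_mul_I ζ]
    rw [habs]; simp [hθdef]
  have hθ0 : θ ≠ 0 := by
    intro h
    rw [h] at hexp; simp at hexp; exact h1 hexp
  have hθpi : θ ≠ π := by
    intro h
    rw [h] at hexp
    rw [Complex.exp_pi_mul_I] at hexp
    exact hneg1 hexp
  have hlo : -π < θ := Complex.neg_pi_lt_arg ζ
  have hhi : θ < π := lt_of_le_of_ne (Complex.arg_le_pi ζ) hθpi
  have hexp2 : Complex.exp ((2 * m : ℕ) * (θ * Complex.I)) = 1 := by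
    rw [Complex.exp_nat_mul, ← hexp, hpow]
  rw [Complex.exp_eq_one_iff] at hexp2
  obtain ⟨n, hn⟩ := hexp2
  have hn' : (2 * m : ℝ) * θ = n * (2 * π) := by
    have := congrArg Complex.im hn
    simpa using this
  have hθeq : θ = n * π / m := by
    field_simp at hn' ⊢
    linarith
  have hn0 : n ≠ 0 := by
    intro h; rw [h] at hθeq; simp at hθeq; exact hθ0 hθeq
  have hpi := Real.pi_pos
  -- |n| ≤ m - 1
  have habsn : |(n : ℝ)| ≤ (m : ℝ) - 1 := by
    have h1' : |θ| < π := abs_lt.mpr ⟨hlo, hhi⟩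
    rw [hθeq, abs_div, abs_mul, abs_of_pos hpi, abs_of_pos hmR] at h1'
    have : |(n : ℝ)| < m := by
      rw [div_lt_iff₀ hmR] at h1'
      nlinarith
    have hint : |n| < (m : ℤ) := by exact_mod_cast this
    have h2 : |n| ≤ (m : ℤ) - 1 := by linarith [Int.lt_iff_add_one_le.mp hint]
    have h3 : ((|n| : ℤ) : ℝ) ≤ ((m : ℤ) : ℝ) - 1 := by exact_mod_cast h2
    rwa [Int.cast_abs, Int.cast_natCast] at h3
  have habsn1 : (1 : ℝ) ≤ |(n : ℝ)| := by
    have h2 : 1 ≤ |n| := Int.one_le_abs hn0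
    have h3 : ((1 : ℤ) : ℝ) ≤ ((|n| : ℤ) : ℝ) := by exact_mod_cast h2
    rwa [Int.cast_abs, Int.cast_one] at h3
  -- u = |θ|
  set u := |θ| with hu
  have hu_lo : π / m ≤ u := by
    rw [hu, hθeq, abs_div, abs_mul, abs_of_pos hpi, abs_of_pos hmR]
    rw [div_le_div_iff₀ hmR hmR]
    nlinarith [mul_nonneg (mul_nonneg (sub_nonneg.mpr habsn1) hpi.le) hmR.le]
  have hu_hi : u ≤ π - π / m := by
    rw [hu, hθeq, abs_div, abs_mul, abs_of_pos hpi, abs_of_pos hmR]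
    rw [div_le_iff₀ hmR]
    have hx : π / m * m = π := by field_simp
    nlinarith [mul_nonneg (sub_nonneg.mpr habsn) hpi.le]
  -- |ζ.im| = sin u
  have him : ζ.im = Real.sin θ := by
    rw [hθdef, Complex.sin_arg, habs, div_one]
  have habs_sin : |ζ.im| = Real.sin u := by
    rw [him, hu]
    rcases le_or_gt 0 θ with h | h
    · rw [abs_of_nonneg h, abs_of_nonneg (Real.sin_nonneg_of_nonneg_of_le_pi h hhi.le)]
    · rw [abs_of_neg h, abs_of_nonpos
        (Real.sin_nonpos_of_nonpos_of_neg_pi_le h.le hlo.le), Real.sin_neg]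
  rw [habs_sin]
  -- v = min u (π - u)
  set v := min u (π - u) with hv
  have hv_lo : π / m ≤ v := le_min hu_lo (by linarith)
  have hv_hi : v ≤ π / 2 := by
    rcases min_le_iff.mpr (Or.inl (le_refl u)) with _
    have := min_le_min (le_refl u) (le_refl (π - u))
    rcases le_total u (π - u) with h | h
    · rw [hv, min_eq_left h]; linarith
    · rw [hv, min_eq_right h]; linarith
  have hsin_uv : Real.sin u = Real.sin v := by
    rcases le_total u (π - u) with h | h
    · rw [hv, min_eq_left h]
    · rw [hv, min_eq_right h, Real.sin_pi_sub]
  rw [hsin_uv]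
  have hbound := Real.mul_le_sin (x := v) (by linarith [div_pos hpi hmR]) hv_hi
  have : 2 / π * (π / m) ≤ 2 / π * v := by
    apply mul_le_mul_of_nonneg_left hv_lo
    positivity
  have h2m : 2 / π * (π / m) = 2 / m := by field_simp
  calc 1 / (m : ℝ) ≤ 2 / m := by apply div_le_div_of_nonneg_right <;> norm_num
    _ = 2 / π * (π / m) := h2m.symm
    _ ≤ 2 / π * v := this
    _ ≤ Real.sin v := hbound
end

lemma aux_pow_entries (k : SL2R) (h11 : k 1 1 = k 0 0) (h01 : k 0 1 = -(k 1 0)) (n : ℕ) :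
    ((k ^ n : SL2R) : Matrix (Fin 2) (Fin 2) ℝ) =
      !![((((k 0 0 : ℝ) : ℂ) + (k 1 0 : ℝ) * Complex.I) ^ n).re,
         -((((k 0 0 : ℝ) : ℂ) + (k 1 0 : ℝ) * Complex.I) ^ n).im;
         ((((k 0 0 : ℝ) : ℂ) + (k 1 0 : ℝ) * Complex.I) ^ n).im,
         ((((k 0 0 : ℝ) : ℂ) + (k 1 0 : ℝ) * Complex.I) ^ n).re] := by
  set ζ : ℂ := ((k 0 0 : ℝ) : ℂ) + (k 1 0 : ℝ) * Complex.I with hζ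
  have hk : (k : Matrix (Fin 2) (Fin 2) ℝ) = !![k 0 0, -(k 1 0); k 1 0, k 0 0] := by
    rw [Matrix.eta_fin_two (k : Matrix (Fin 2) (Fin 2) ℝ), h01, h11]
    simp
  induction n with
  | zero => simp [Matrix.one_fin_two]
  | succ n ih =>
    rw [pow_succ, Matrix.SpecialLinearGroup.coe_mul, ih, hk, pow_succ]
    ext i j
    fin_cases i <;> fin_cases j <;>
      simp [hζ, Matrix.mul_apply, Fin.sum_univ_two, Complex.mul_re, Complex.mul_im,
        Complex.add_re, Complex.add_im, Complex.ofReal_re, Complex.ofReal_im,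
        Complex.I_re, Complex.I_im] <;> ring

lemma aux_cosh_dist_rot (k : SL2R) (h11 : k 1 1 = k 0 0) (h01 : k 0 1 = -(k 1 0)) (w : ℍ) :
    Real.cosh (dist w (k • w)) =
      1 + 2 * (k 1 0 : ℝ) ^ 2 * Real.sinh (dist w UpperHalfPlane.I) ^ 2 := by
  set a : ℝ := k 0 0 with ha
  set c : ℝ := k 1 0 with hc
  have hdet : a ^ 2 + c ^ 2 = 1 := by
    have hd := k.2
    rw [Matrix.det_fin_two] at hd
    rw [show (k : Matrix (Fin 2) (Fin 2) ℝ) 0 0 = k 0 0 from rfl,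
      show (k : Matrix (Fin 2) (Fin 2) ℝ) 0 1 = k 0 1 from rfl,
      show (k : Matrix (Fin 2) (Fin 2) ℝ) 1 0 = k 1 0 from rfl,
      show (k : Matrix (Fin 2) (Fin 2) ℝ) 1 1 = k 1 1 from rfl, h01, h11] at hd
    nlinarith [hd]
  have hD : ((c : ℂ) * w + (a : ℂ)) ≠ 0 := by
    have := aux_denom_ne_zero k w
    rwa [← hc, h11] at this
  have hcoe : ((k • w : ℍ) : ℂ) = ((a : ℂ) * w - c) / ((c : ℂ) * w + a) := by
    rw [aux_coe_smul_SL, h11, h01, ← ha, ← hc]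
    push_cast
    ring_nf
  -- imaginary part of k • w
  have him : (k • w).im = w.im / Complex.normSq ((c : ℂ) * w + a) := by
    rw [← UpperHalfPlane.coe_im, hcoe, Complex.div_im]
    have h1 : ((a : ℂ) * w - c).im = a * w.im := by
      simp [Complex.sub_im, Complex.mul_im]
    have h2 : ((a : ℂ) * w - c).re = a * w.re - c := by
      simp [Complex.sub_re, Complex.mul_re, UpperHalfPlane.coe_re]
    have h3 : ((c : ℂ) * w + a).im = c * w.im := by
      simp [Complex.add_im, Complex.mul_im]
    have h4 : ((c : ℂ) * w + a).re = c * w.re + a := by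
      simp [Complex.add_re, Complex.mul_re, UpperHalfPlane.coe_re]
    rw [h1, h2, h3, h4, div_sub_div_same]
    congr 1
    linear_combination (w.im : ℝ) * hdet
  have hw : (0:ℝ) < w.im := w.im_pos
  have hIim : (UpperHalfPlane.I : ℍ).im = 1 := rfl
  have hIcoe : ((UpperHalfPlane.I : ℍ) : ℂ) = Complex.I := rfl
  have hdiff : (w : ℂ) - ((k • w : ℍ) : ℂ) = ((c : ℂ) * ((w:ℂ)^2 + 1)) / ((c:ℂ)*w + a) := by
    rw [hcoe, eq_div_iff hD, sub_mul, div_mul_cancel₀ _ hD]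
    ring
  have hdist2 : dist (w : ℂ) (((k • w : ℍ)) : ℂ) ^ 2
      = c^2 * Complex.normSq ((w:ℂ)^2 + 1) / Complex.normSq ((c:ℂ)*w + a) := by
    rw [Complex.dist_eq, Complex.sq_norm, hdiff, Complex.normSq_div, Complex.normSq_mul,
      Complex.normSq_ofReal]
    ring
  have e1 : Real.sinh (dist w UpperHalfPlane.I / 2) ^ 2
      = Complex.normSq ((w:ℂ) - Complex.I) / (4 * w.im) := by
    rw [UpperHalfPlane.sinh_half_dist, hIim, hIcoe, mul_one, div_pow, Complex.dist_eq,
      Complex.sq_norm, mul_pow]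
    norm_num [Real.sq_sqrt hw.le]
  have e2 : Real.cosh (dist w UpperHalfPlane.I / 2) ^ 2
      = Complex.normSq ((w:ℂ) + Complex.I) / (4 * w.im) := by
    rw [UpperHalfPlane.cosh_half_dist, hIim, hIcoe, mul_one, div_pow, Complex.dist_eq,
      Complex.sq_norm, mul_pow, Complex.conj_I]
    norm_num [Real.sq_sqrt hw.le, sub_neg_eq_add]
  have hs2 : Real.sinh (dist w UpperHalfPlane.I)
      = 2 * Real.sinh (dist w UpperHalfPlane.I / 2) * Real.cosh (dist w UpperHalfPlane.I / 2) := by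
    have h := Real.sinh_two_mul (dist w UpperHalfPlane.I / 2)
    rwa [show 2 * (dist w UpperHalfPlane.I / 2) = dist w UpperHalfPlane.I by ring] at h
  have hsinh : Real.sinh (dist w UpperHalfPlane.I) ^ 2
      = Complex.normSq ((w:ℂ)^2 + 1) / (4 * w.im ^ 2) := by
    rw [hs2, mul_pow, mul_pow, e1, e2,
      show ((w:ℂ)^2 + 1) = ((w:ℂ) - Complex.I) * ((w:ℂ) + Complex.I) by
        rw [show ((w:ℂ) - Complex.I) * ((w:ℂ) + Complex.I) = (w:ℂ)^2 - Complex.I^2 by ring,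
          Complex.I_sq]; ring,
      Complex.normSq_mul]
    field_simp
    ring
  have hns : Complex.normSq ((c : ℂ) * w + a) ≠ 0 := (Complex.normSq_pos.mpr hD).ne'
  rw [UpperHalfPlane.cosh_dist, him, hdist2, hsinh]
  field_simp
  have hns' : Complex.normSq ((w:ℂ) * c + a) ≠ 0 := by rwa [mul_comm]
  field_simp
  ring


set_option maxHeartbeats 1600000 in
theorem cosh_dist_elliptic_lower_bound
    (γ : SL2R) (hγ1 : γ ≠ 1) (hγ2 : γ ≠ -1)
    (htr : |Matrix.trace (γ : Matrix (Fin 2) (Fin 2) ℝ)| < 2)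
    (z₀ : ℍ) (hz₀ : γ • z₀ = z₀)
    (m : ℕ) (hm : 1 ≤ m) (horder : orderOf γ = 2 * m)
    (δ : ℝ) (hδ : 0 < δ) :
    ∀ z : ℍ, δ < dist z z₀ →
      1 + (δ / m) ^ 2 < Real.cosh (dist z (γ • z)) := by
  intro z hz
  have hy₀ : 0 < z₀.im := z₀.im_pos
  set s : ℝ := Real.sqrt z₀.im with hs
  have hs0 : 0 < s := Real.sqrt_pos.mpr hy₀
  have hs2 : s ^ 2 = z₀.im := Real.sq_sqrt hy₀.le
  have hdetg : Matrix.det !![s, z₀.re / s; 0, s⁻¹] = 1 := by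
    rw [Matrix.det_fin_two_of]
    field_simp
    simp
  set g : SL2R := ⟨!![s, z₀.re / s; 0, s⁻¹], hdetg⟩ with hg
  have hg00 : g 0 0 = s := rfl
  have hg01 : g 0 1 = z₀.re / s := rfl
  have hg10 : g 1 0 = 0 := rfl
  have hg11 : g 1 1 = s⁻¹ := rfl
  have hgI : g • UpperHalfPlane.I = z₀ := by
    apply UpperHalfPlane.ext
    rw [aux_coe_smul_SL, hg00, hg01, hg10, hg11,
      show ((UpperHalfPlane.I : ℍ) : ℂ) = Complex.I from rfl,
      ← UpperHalfPlane.re_add_im z₀]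
    have hs2C : (s : ℂ) ^ 2 = (z₀.im : ℂ) := by exact_mod_cast hs2
    have hsC : (s : ℂ) ≠ 0 := by exact_mod_cast hs0.ne'
    push_cast
    field_simp
    linear_combination Complex.I * hs2C
  set k : SL2R := g⁻¹ * γ * g with hk
  have hkI : k • UpperHalfPlane.I = UpperHalfPlane.I := by
    rw [hk, mul_smul, mul_smul, hgI, hz₀, inv_smul_eq_iff, hgI]
  obtain ⟨h11, h01⟩ := aux_stab_I k hkI
  have hγk : γ = g * k * g⁻¹ := by rw [hk]; group
  have hk1 : k ≠ 1 := by
    intro h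
    apply hγ1
    rw [hγk, h]
    group
  have hkneg1 : k ≠ -1 := by
    intro h
    apply hγ2
    rw [hγk, h]
    simp [mul_neg, neg_mul]
  have hγpow : γ ^ (2 * m) = 1 := by rw [← horder]; exact pow_orderOf_eq_one γ
  have hkpow : k ^ (2 * m) = 1 := by
    rw [hk, show g⁻¹ * γ * g = g⁻¹ * γ * (g⁻¹)⁻¹ by group, conj_pow, hγpow]
    group
  set ζ : ℂ := ((k 0 0 : ℝ) : ℂ) + ((k 1 0 : ℝ) : ℂ) * Complex.I with hζ
  have hmat := aux_pow_entries k h11 h01 (2 * m)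
  rw [hkpow] at hmat
  have hre : (ζ ^ (2 * m)).re = 1 := by
    have h := congrFun (congrFun hmat 0) 0
    simpa [Matrix.SpecialLinearGroup.coe_one, Matrix.one_apply] using h.symm
  have him0 : (ζ ^ (2 * m)).im = 0 := by
    have h := congrFun (congrFun hmat 1) 0
    simpa [Matrix.SpecialLinearGroup.coe_one, Matrix.one_apply] using h.symm
  have hζpow : ζ ^ (2 * m) = 1 := by
    apply Complex.ext
    · simpa using hre
    · simpa using him0
  have hdet : (k 0 0 : ℝ) ^ 2 + (k 1 0 : ℝ) ^ 2 = 1 := by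
    have hd := k.2
    rw [Matrix.det_fin_two] at hd
    rw [show (k : Matrix (Fin 2) (Fin 2) ℝ) 0 0 = k 0 0 from rfl,
      show (k : Matrix (Fin 2) (Fin 2) ℝ) 0 1 = k 0 1 from rfl,
      show (k : Matrix (Fin 2) (Fin 2) ℝ) 1 0 = k 1 0 from rfl,
      show (k : Matrix (Fin 2) (Fin 2) ℝ) 1 1 = k 1 1 from rfl, h01, h11] at hd
    nlinarith [hd]
  have habsζ : ‖ζ‖ = 1 := by
    rw [hζ, Complex.norm_def, Complex.normSq_add_mul_I, hdet, Real.sqrt_one]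
  have hζ1 : ζ ≠ 1 := by
    intro h
    apply hk1
    have hre1 : (k 0 0 : ℝ) = 1 := by
      have := congrArg Complex.re h; simpa [hζ] using this
    have him1 : (k 1 0 : ℝ) = 0 := by
      have := congrArg Complex.im h; simpa [hζ] using this
    apply Matrix.SpecialLinearGroup.ext
    intro i j
    fin_cases i <;> fin_cases j <;>
      simp [h11, h01, hre1, him1, Matrix.one_apply]
  have hζneg1 : ζ ≠ -1 := by
    intro h
    apply hkneg1
    have hre1 : (k 0 0 : ℝ) = -1 := by
      have := congrArg Complex.re h; simpa [hζ] using this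
    have him1 : (k 1 0 : ℝ) = 0 := by
      have := congrArg Complex.im h; simpa [hζ] using this
    apply Matrix.SpecialLinearGroup.ext
    intro i j
    fin_cases i <;> fin_cases j <;>
      simp [h11, h01, hre1, him1, Matrix.one_apply]
  have hcbound : 1 / (m : ℝ) ≤ |(k 1 0 : ℝ)| := by
    have h := aux_im_bound m ζ habsζ hζpow hζ1 hζneg1
    simpa [hζ] using h
  set w : ℍ := g⁻¹ • z with hw
  have hdistw : dist w UpperHalfPlane.I = dist z z₀ := by
    have hinv : g⁻¹ • z₀ = UpperHalfPlane.I := by rw [inv_smul_eq_iff, hgI]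
    rw [hw, ← hinv, dist_smul]
  have hdistk : dist z (γ • z) = dist w (k • w) := by
    have hkww : k • w = g⁻¹ • (γ • z) := by
      rw [hw, hk, smul_smul, show g⁻¹ * γ * g * g⁻¹ = g⁻¹ * γ by group, mul_smul]
    rw [hkww, hw]
    exact (dist_smul _ _ _).symm
  rw [hdistk, aux_cosh_dist_rot k h11 h01 w, hdistw]
  -- final numeric estimate
  have hmR : (1 : ℝ) ≤ (m : ℝ) := by exact_mod_cast hm
  have hr0 : 0 < dist z z₀ := lt_trans hδ hz
  have hsinh : δ < Real.sinh (dist z z₀) :=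
    lt_trans hz (Real.self_lt_sinh_iff.mpr hr0)
  have hδs : δ ^ 2 < Real.sinh (dist z z₀) ^ 2 := by
    apply pow_lt_pow_left₀ hsinh hδ.le
    norm_num
  have hc2 : (1 / (m : ℝ)) ^ 2 ≤ (k 1 0 : ℝ) ^ 2 := by
    calc (1 / (m : ℝ)) ^ 2 ≤ |(k 1 0 : ℝ)| ^ 2 := by
          apply pow_le_pow_left₀ (by positivity) hcbound
      _ = (k 1 0 : ℝ) ^ 2 := sq_abs _
  have h1 : δ ^ 2 * (1 / (m : ℝ)) ^ 2 < Real.sinh (dist z z₀) ^ 2 * (1 / (m : ℝ)) ^ 2 := by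
    apply mul_lt_mul_of_pos_right hδs
    positivity
  have h2 : Real.sinh (dist z z₀) ^ 2 * (1 / (m : ℝ)) ^ 2
      ≤ Real.sinh (dist z z₀) ^ 2 * (k 1 0 : ℝ) ^ 2 :=
    mul_le_mul_of_nonneg_left hc2 (sq_nonneg _)
  have h3 : (δ / m) ^ 2 = δ ^ 2 * (1 / (m : ℝ)) ^ 2 := by ring
  have h4 : 0 ≤ Real.sinh (dist z z₀) ^ 2 * (k 1 0 : ℝ) ^ 2 := by positivity
  linarith
end

section
/- Fix δ ∈ (0,1) and Y larger than the order of every stabilizer subgroup of an elliptic point of SL(2,ℤ). Let F_δ be the set of z ∈ ℍ with |Re z| ≤ 1/2, Y^{-1} < Im z, and d(z, e) > δ for every elliptic point e of SL(2,ℤ). Then for every γ ∈ SL(2,ℤ) \ {±I} and every z ∈ F_δ with Im z < 2, the hyperbolic distance satisfies d(z, γz) > δ/(4Y). -/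
open UpperHalfPlane

local notation "SL2Z" => Matrix.SpecialLinearGroup (Fin 2) ℤ

/-- An elliptic point of `SL(2,ℤ)`: a point of ℍ fixed by some `γ ≠ ±I`. -/
def IsEllipticPoint (e : ℍ) : Prop :=
  ∃ γ : SL2Z, γ ≠ 1 ∧ γ ≠ -1 ∧ γ • e = e

namespace DistLowerBoundAux

lemma smul_coe' (γ : SL2Z) (z : ℍ) :
    ((γ • z : ℍ) : ℂ) = ((γ 0 0 : ℂ) * z + γ 0 1) / ((γ 1 0 : ℂ) * z + γ 1 1) := by
  rw [UpperHalfPlane.coe_specialLinearGroup_apply]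
  simp

lemma denom_ne_zero' (γ : SL2Z) (z : ℍ) : ((γ 1 0 : ℂ) * z + γ 1 1) ≠ 0 :=
  (ModularGroup.denom_apply γ z) ▸ UpperHalfPlane.denom_ne_zero _ z

lemma det_entries (γ : SL2Z) : γ 0 0 * γ 1 1 - γ 0 1 * γ 1 0 = 1 := by
  have := γ.prop
  rwa [Matrix.det_fin_two] at this

lemma fixed_of_root (γ : SL2Z) (e : ℍ)
    (h : (γ 1 0 : ℂ) * e ^ 2 + ((γ 1 1 : ℂ) - γ 0 0) * e - γ 0 1 = 0) : γ • e = e := by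
  ext
  rw [smul_coe', div_eq_iff (denom_ne_zero' γ e)]
  linear_combination -h

lemma sinh_half_dist_smul (γ : SL2Z) (z : ℍ) :
    Real.sinh (dist z (γ • z) / 2)
      = ‖(γ 1 0 : ℂ) * z ^ 2 + ((γ 1 1 : ℂ) - γ 0 0) * z - γ 0 1‖ / (2 * z.im) := by
  have hd0 := denom_ne_zero' γ z
  have hda : 0 < ‖(γ 1 0 : ℂ) * z + γ 1 1‖ := norm_pos_iff.mpr hd0
  have him : (γ • z).im = z.im / Complex.normSq ((γ 1 0 : ℂ) * z + γ 1 1) := by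
    rw [ModularGroup.im_smul_eq_div_normSq, ModularGroup.denom_apply]
  rw [UpperHalfPlane.sinh_half_dist]
  have h1 : dist (z : ℂ) ((γ • z : ℍ) : ℂ)
      = ‖(γ 1 0 : ℂ) * z ^ 2 + ((γ 1 1 : ℂ) - γ 0 0) * z - γ 0 1‖
        / ‖(γ 1 0 : ℂ) * z + γ 1 1‖ := by
    rw [Complex.dist_eq, smul_coe', ← norm_div]
    congr 1
    rw [eq_div_iff hd0, sub_mul, div_mul_cancel₀ _ hd0]
    ring
  have h2 : Real.sqrt (z.im * (γ • z).im) = z.im / ‖(γ 1 0 : ℂ) * z + γ 1 1‖ := by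
    rw [him, Complex.normSq_eq_norm_sq]
    rw [show z.im * (z.im / ‖(γ 1 0 : ℂ) * z + γ 1 1‖ ^ 2)
        = (z.im / ‖(γ 1 0 : ℂ) * z + γ 1 1‖) ^ 2 by ring]
    exact Real.sqrt_sq (by positivity)
  rw [h1, h2]
  have hy : (0:ℝ) < z.im := z.im_pos
  field_simp

lemma S_smul_I : ModularGroup.S • UpperHalfPlane.I = UpperHalfPlane.I := by
  rw [UpperHalfPlane.modular_S_smul]
  ext
  show ((-(UpperHalfPlane.I : ℂ))⁻¹ : ℂ) = (UpperHalfPlane.I : ℂ)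
  show ((-Complex.I)⁻¹ : ℂ) = Complex.I
  rw [inv_neg, Complex.inv_I, neg_neg]

lemma stab_I_eq : {γ : SL2Z | γ • UpperHalfPlane.I = UpperHalfPlane.I}
    = {1, -1, ModularGroup.S, -ModularGroup.S} := by
  ext γ
  simp only [Set.mem_setOf_eq, Set.mem_insert_iff, Set.mem_singleton_iff]
  constructor
  · intro h
    have hc : ((γ • UpperHalfPlane.I : ℍ) : ℂ) = Complex.I := by rw [h]; rfl
    rw [smul_coe', div_eq_iff (denom_ne_zero' γ _)] at hc
    have hI : (UpperHalfPlane.I : ℂ) = Complex.I := rfl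
    rw [hI] at hc
    have hre := congrArg Complex.re hc
    have him := congrArg Complex.im hc
    simp [Complex.add_re, Complex.add_im, Complex.mul_re, Complex.mul_im] at hre him
    have hb : (γ 0 1 : ℤ) = - γ 1 0 := by exact_mod_cast hre
    have ha : (γ 0 0 : ℤ) = γ 1 1 := by exact_mod_cast him
    have hdet := det_entries γ
    have hsum : γ 0 0 ^ 2 + (γ 1 0) ^ 2 = 1 := by
      linear_combination hdet + γ 0 0 * ha + γ 1 0 * hb
    have hA1 : -1 ≤ γ 0 0 := by nlinarith [sq_nonneg (γ 1 0), sq_nonneg (γ 0 0 + 1)]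
    have hA2 : γ 0 0 ≤ 1 := by nlinarith [sq_nonneg (γ 1 0), sq_nonneg (γ 0 0 - 1)]
    have hC1 : -1 ≤ γ 1 0 := by nlinarith [sq_nonneg (γ 0 0), sq_nonneg (γ 1 0 + 1)]
    have hC2 : γ 1 0 ≤ 1 := by nlinarith [sq_nonneg (γ 0 0), sq_nonneg (γ 1 0 - 1)]
    interval_cases hA : (γ 0 0) <;> interval_cases hC : (γ 1 0)
    · exfalso; norm_num [hA, hC] at hsum
    · right; left
      apply Matrix.SpecialLinearGroup.ext; intro i j
      fin_cases i <;> fin_cases j <;>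
        simp [Matrix.SpecialLinearGroup.coe_neg, Matrix.SpecialLinearGroup.coe_one,
          Matrix.one_apply, hA, hC, hb] <;> omega
    · exfalso; norm_num [hA, hC] at hsum
    · right; right; right
      apply Matrix.SpecialLinearGroup.ext; intro i j
      fin_cases i <;> fin_cases j <;>
        simp [Matrix.SpecialLinearGroup.coe_neg, ModularGroup.coe_S, hA, hC, hb] <;> omega
    · exfalso; norm_num [hA, hC] at hsum
    · right; right; left
      apply Matrix.SpecialLinearGroup.ext; intro i j
      fin_cases i <;> fin_cases j <;>
        simp [ModularGroup.coe_S, hA, hC, hb] <;> omega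
    · exfalso; norm_num [hA, hC] at hsum
    · left
      apply Matrix.SpecialLinearGroup.ext; intro i j
      fin_cases i <;> fin_cases j <;>
        simp [Matrix.SpecialLinearGroup.coe_one, Matrix.one_apply, hA, hC, hb] <;> omega
    · exfalso; norm_num [hA, hC] at hsum
  · rintro (rfl | rfl | rfl | rfl)
    · simp
    · rw [ModularGroup.SL_neg_smul]; simp
    · exact S_smul_I
    · rw [ModularGroup.SL_neg_smul]; exact S_smul_I

lemma entry_ne {g h : SL2Z} (i j : Fin 2) (H : g i j ≠ h i j) : g ≠ h :=
  fun e => H (by rw [e])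

lemma e1 : (1 : SL2Z) 0 0 = 1 := by simp
lemma e2 : (1 : SL2Z) 1 0 = 0 := by simp
lemma e3 : (-1 : SL2Z) 0 0 = -1 := by simp
lemma e4 : (-1 : SL2Z) 1 0 = 0 := by simp
lemma e5 : (ModularGroup.S) 1 0 = 1 := by simp [ModularGroup.coe_S]
lemma e6 : (-ModularGroup.S) 1 0 = -1 := by simp [ModularGroup.coe_S]

lemma hne1 : (1 : SL2Z) ≠ -1 := entry_ne 0 0 (by rw [e1, e3]; decide)
lemma hne2 : (1 : SL2Z) ≠ ModularGroup.S := entry_ne 1 0 (by rw [e2, e5]; decide)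
lemma hne3 : (1 : SL2Z) ≠ -ModularGroup.S := entry_ne 1 0 (by rw [e2, e6]; decide)
lemma hne4 : (-1 : SL2Z) ≠ ModularGroup.S := entry_ne 1 0 (by rw [e4, e5]; decide)
lemma hne5 : (-1 : SL2Z) ≠ -ModularGroup.S := entry_ne 1 0 (by rw [e4, e6]; decide)
lemma hne6 : ModularGroup.S ≠ -ModularGroup.S := entry_ne 1 0 (by rw [e5, e6]; decide)

lemma ncard4 : ({1, -1, ModularGroup.S, -ModularGroup.S} : Set SL2Z).ncard = 4 := by
  rw [Set.ncard_insert_of_notMem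
        (by simp only [Set.mem_insert_iff, Set.mem_singleton_iff]; push_neg
            exact ⟨hne1, hne2, hne3⟩),
      Set.ncard_insert_of_notMem
        (by simp only [Set.mem_insert_iff, Set.mem_singleton_iff]; push_neg
            exact ⟨hne4, hne5⟩),
      Set.ncard_pair hne6]

lemma card_stab_I :
    Nat.card {γ : SL2Z // γ • UpperHalfPlane.I = UpperHalfPlane.I} = 4 := by
  have h : Nat.card {γ : SL2Z // γ • UpperHalfPlane.I = UpperHalfPlane.I}
      = ({γ : SL2Z | γ • UpperHalfPlane.I = UpperHalfPlane.I}).ncard :=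
    Nat.card_coe_set_eq _
  rw [h, stab_I_eq, ncard4]

lemma I_elliptic : IsEllipticPoint UpperHalfPlane.I :=
  ⟨ModularGroup.S, hne2.symm, hne4.symm, S_smul_I⟩

lemma sinh_le_two_mul {x : ℝ} (h0 : 0 ≤ x) (h : x ≤ 1/2) : Real.sinh x ≤ 2 * x := by
  rw [Real.sinh_eq]
  have h1 : 1 - x ≤ Real.exp (-x) := by
    have := Real.add_one_le_exp (-x); linarith
  have h2 : Real.exp x * Real.exp (-x) = 1 := by
    rw [← Real.exp_add]; simp
  have h3 : Real.exp x * (1 - x) ≤ 1 := by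
    nlinarith [Real.exp_pos x]
  nlinarith [Real.exp_pos x, mul_nonneg h0 (by linarith : (0:ℝ) ≤ 2 - 3*x)]

end DistLowerBoundAux

set_option maxHeartbeats 3200000 in
open DistLowerBoundAux in
theorem dist_lower_bound_bulk
    (δ Y : ℝ) (hδ0 : 0 < δ) (hδ1 : δ < 1)
    (hY : ∀ e : ℍ, IsEllipticPoint e →
      (Nat.card {γ : SL2Z // γ • e = e} : ℝ) < Y)
    (z : ℍ) (hre : |z.re| ≤ 1 / 2) (him : Y⁻¹ < z.im)
    (hbulk : ∀ e : ℍ, IsEllipticPoint e → δ < dist z e)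
    (him2 : z.im < 2) :
    ∀ γ : SL2Z, γ ≠ 1 → γ ≠ -1 → δ / (4 * Y) < dist z (γ • z) := by
  have hY4 : (4:ℝ) < Y := by
    have := hY _ I_elliptic
    rwa [card_stab_I, Nat.cast_ofNat] at this
  have hY0 : (0:ℝ) < Y := by linarith
  intro γ hγ1 hγn1
  have hdet : γ 0 0 * γ 1 1 - γ 0 1 * γ 1 0 = 1 := det_entries γ
  have hy0 : 0 < z.im := z.im_pos
  have hyY : 1/Y < z.im := by rw [one_div]; exact him
  set a : ℤ := γ 0 0 with hA
  set b : ℤ := γ 0 1 with hB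
  set c : ℤ := γ 1 0 with hC
  set d : ℤ := γ 1 1 with hD'
  have hkey := sinh_half_dist_smul γ z
  rw [← hA, ← hB, ← hC, ← hD'] at hkey
  set Q : ℂ := (c:ℂ) * (z:ℂ) ^ 2 + ((d:ℂ) - (a:ℂ)) * (z:ℂ) - (b:ℂ) with hQ
  clear_value a b c d Q
  -- master reduction
  suffices hs : Real.sinh (δ/(8*Y)) < ‖Q‖ / (2*z.im) by
    rw [← hkey] at hs
    have h2 := Real.sinh_lt_sinh.mp hs
    have h48 : δ/(4*Y) = 2*(δ/(8*Y)) := by ring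
    linarith
  have hss : 0 ≤ δ/(8*Y) := by positivity
  have hsmall : δ/(8*Y) ≤ 1/2 := by
    rw [div_le_iff₀ (by positivity)]; nlinarith
  have hsinh_le : Real.sinh (δ/(8*Y)) ≤ δ/(4*Y) := by
    have := sinh_le_two_mul hss hsmall
    linarith [this, (by ring : 2*(δ/(8*Y)) = δ/(4*Y))]
  by_cases hc : c = 0
  · -- c = 0 : translation-type, |Q| = |b| >= 1
    have hcC : (c:ℂ) = 0 := by exact_mod_cast hc
    have had : a * d = 1 := by rw [hc] at hdet; simpa using hdet
    have hb0 : b ≠ 0 := by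
      intro hb0
      rcases Int.mul_eq_one_iff_eq_one_or_neg_one.mp had with ⟨ha1, hd1⟩ | ⟨ha1, hd1⟩
      · apply hγ1
        apply Matrix.SpecialLinearGroup.ext; intro i j
        fin_cases i <;> fin_cases j <;>
          simp [Matrix.SpecialLinearGroup.coe_one, Matrix.one_apply, ← hA, ← hB, ← hC, ← hD',
            ha1, hd1, hb0, hc]
      · apply hγn1
        apply Matrix.SpecialLinearGroup.ext; intro i j
        fin_cases i <;> fin_cases j <;>
          simp [Matrix.SpecialLinearGroup.coe_neg, Matrix.SpecialLinearGroup.coe_one,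
            Matrix.one_apply, ← hA, ← hB, ← hC, ← hD', ha1, hd1, hb0, hc]
    have hdaC : (d:ℂ) - a = 0 := by
      rcases Int.mul_eq_one_iff_eq_one_or_neg_one.mp had with ⟨ha1, hd1⟩ | ⟨ha1, hd1⟩ <;>
        rw [ha1, hd1] <;> norm_num
    have hQB : ‖Q‖ = |(b:ℝ)| := by
      rw [hQ, hcC, hdaC]
      simp
    have hb1 : (1:ℝ) ≤ |(b:ℝ)| := by exact_mod_cast Int.one_le_abs hb0
    have h14 : (1:ℝ)/4 < 1/(2*z.im) := by
      rw [div_lt_div_iff₀ (by norm_num) (by positivity)]; nlinarith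
    have hq : 1/(2*z.im) ≤ ‖Q‖/(2*z.im) :=
      (div_le_div_iff_of_pos_right (by positivity)).mpr (by rw [hQB]; exact hb1)
    have hd16 : δ/(4*Y) < 1/4 := by
      rw [div_lt_div_iff₀ (by positivity) (by norm_num)]; nlinarith
    linarith
  · -- c ≠ 0
    have hcR : ((c:ℝ)) ≠ 0 := Int.cast_ne_zero.mpr hc
    have hcC : ((c:ℂ)) ≠ 0 := Int.cast_ne_zero.mpr hc
    have hc1 : (1:ℝ) ≤ |(c:ℝ)| := by exact_mod_cast Int.one_le_abs hc
    have hdetR : (a:ℝ)*d - (b:ℝ)*c = 1 := by exact_mod_cast hdet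
    by_cases hD4 : 4 ≤ (a+d)^2
    · -- |trace| ≥ 2 : |Q| ≥ y²
      have hzc : (z:ℂ) = (z.re:ℂ) + (z.im:ℂ)*Complex.I := (Complex.re_add_im (z:ℂ)).symm
      have hQc : Q = (((c:ℝ)*(z.re^2 - z.im^2) + ((d:ℝ)-(a:ℝ))*z.re - (b:ℝ) : ℝ) : ℂ)
          + ((z.im*(2*(c:ℝ)*z.re + (d:ℝ) - (a:ℝ)) : ℝ) : ℂ) * Complex.I := by
        rw [hQ, hzc]
        push_cast
        linear_combination ((c:ℂ)*(z.im:ℂ)^2) * Complex.I_sq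
      have hQre : Q.re = (c:ℝ)*(z.re^2 - z.im^2) + ((d:ℝ)-(a:ℝ))*z.re - (b:ℝ) := by
        rw [hQc]
        simp only [Complex.add_re, Complex.mul_re, Complex.ofReal_re, Complex.ofReal_im,
          Complex.I_re, Complex.I_im]
        ring
      have hQim : Q.im = z.im*(2*(c:ℝ)*z.re + (d:ℝ) - (a:ℝ)) := by
        rw [hQc]
        simp only [Complex.add_im, Complex.mul_im, Complex.ofReal_re, Complex.ofReal_im,
          Complex.I_re, Complex.I_im]
        ring
      have habs2 : ‖Q‖^2 = Q.re^2 + Q.im^2 := by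
        rw [Complex.sq_norm, Complex.normSq_apply]; ring
      have hDR : (4:ℝ) ≤ ((a:ℝ)+(d:ℝ))^2 := by exact_mod_cast hD4
      have hident : 16*(c:ℝ)^2 * (Q.re^2 + Q.im^2 - (c:ℝ)^2*z.im^4)
          = ((2*(c:ℝ)*z.re+(d:ℝ)-(a:ℝ))^2 - (((a:ℝ)+(d:ℝ))^2-4))^2
            + 8*(c:ℝ)^2*z.im^2*((2*(c:ℝ)*z.re+(d:ℝ)-(a:ℝ))^2 + (((a:ℝ)+(d:ℝ))^2-4)) := by
        rw [hQre, hQim]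
        linear_combination (32*(c:ℝ)*((c:ℝ)*(z.re^2 - z.im^2)+((d:ℝ)-(a:ℝ))*z.re)
          - 16*(a:ℝ)*(d:ℝ) - 16*(b:ℝ)*(c:ℝ) + 16) * hdetR
      have hrhs : 0 ≤ 16*(c:ℝ)^2 * (Q.re^2 + Q.im^2 - (c:ℝ)^2*z.im^4) := by
        rw [hident]
        have h1 : 0 ≤ ((2*(c:ℝ)*z.re+(d:ℝ)-(a:ℝ))^2 - (((a:ℝ)+(d:ℝ))^2-4))^2 := sq_nonneg _
        have h2 : 0 ≤ 8*(c:ℝ)^2*z.im^2*((2*(c:ℝ)*z.re+(d:ℝ)-(a:ℝ))^2 + (((a:ℝ)+(d:ℝ))^2-4)) := by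
          apply mul_nonneg (by positivity)
          have := sq_nonneg (2*(c:ℝ)*z.re+(d:ℝ)-(a:ℝ))
          linarith
        linarith
      have h16 : (0:ℝ) < 16*(c:ℝ)^2 := by positivity
      have hkey2 : (c:ℝ)^2 * z.im^4 ≤ ‖Q‖^2 := by
        rw [habs2]
        by_contra hlt
        push_neg at hlt
        exact absurd hrhs (not_le.mpr (mul_neg_of_pos_of_neg h16 (by linarith)))
      clear hident hrhs hQc hzc hQre hQim habs2
      have hc2 : (1:ℝ) ≤ (c:ℝ)^2 := by
        calc (1:ℝ) = 1^2 := by norm_num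
          _ ≤ |(c:ℝ)|^2 := pow_le_pow_left₀ (by norm_num) hc1 2
          _ = (c:ℝ)^2 := sq_abs _
      have hsq2 : (z.im^2)^2 ≤ ‖Q‖^2 := by nlinarith [hkey2, sq_nonneg z.im, hy0]
      have habs0 : (0:ℝ) ≤ ‖Q‖ := norm_nonneg _
      have hyQ : z.im^2 ≤ ‖Q‖ := by
        by_contra hno
        push_neg at hno
        nlinarith [hsq2, habs0, hy0, sq_nonneg z.im]
      have hstep1 : δ/(4*Y) < 1/(2*Y) := by
        rw [div_lt_div_iff₀ (by positivity) (by positivity)]; nlinarith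
      have hstep2 : 1/(2*Y) < z.im/2 := by
        have : 1/(2*Y) = (1/Y)/2 := by ring
        rw [this]; linarith
      have hstep3 : z.im/2 ≤ ‖Q‖/(2*z.im) := by
        rw [div_le_div_iff₀ (by norm_num) (by positivity)]
        nlinarith
      linarith
    · -- elliptic case
      push_neg at hD4
      have htrle : a + d ≤ 1 := by nlinarith [sq_nonneg (a+d-2)]
      have htrge : -1 ≤ a + d := by nlinarith [sq_nonneg (a+d+2)]
      have htr : (a+d)^2 ≤ 1 := by nlinarith
      have htrR : ((a:ℝ)+(d:ℝ))^2 ≤ 1 := by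
        have : ((a+d:ℤ):ℝ)^2 ≤ 1 := by exact_mod_cast htr
        push_cast at this; linarith
      have hE0 : (0:ℝ) < 4 - ((a:ℝ)+(d:ℝ))^2 := by linarith
      set u : ℝ := ((a:ℝ) - (d:ℝ))/(2*(c:ℝ)) with hu
      set v : ℝ := Real.sqrt (4 - ((a:ℝ)+(d:ℝ))^2) / (2*|(c:ℝ)|) with hv
      have hcabs : (0:ℝ) < |(c:ℝ)| := by positivity
      have hv0 : 0 < v := by
        rw [hv]; exact div_pos (Real.sqrt_pos.mpr hE0) (by positivity)
      have hsqE : Real.sqrt (4 - ((a:ℝ)+(d:ℝ))^2)^2 = 4 - ((a:ℝ)+(d:ℝ))^2 :=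
        Real.sq_sqrt (le_of_lt hE0)
      have hvR : 4*(c:ℝ)^2*v^2 = 4 - ((a:ℝ)+(d:ℝ))^2 := by
        rw [hv, div_pow, hsqE, mul_pow, sq_abs]
        field_simp
        ring
      have huC : 2*(c:ℂ)*(u:ℂ) = (a:ℂ) - (d:ℂ) := by
        rw [hu]; push_cast; field_simp
      have hvC : 4*(c:ℂ)^2*(v:ℂ)^2 = 4 - ((a:ℂ)+(d:ℂ))^2 := by
        have := hvR; push_cast
        exact_mod_cast congrArg (fun t : ℝ => (t:ℂ)) this
      have hdetC : (a:ℂ)*(d:ℂ) - (b:ℂ)*(c:ℂ) = 1 := by exact_mod_cast hdet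
      have hI2 : Complex.I^2 = -1 := Complex.I_sq
      have he4 : (4:ℂ)*(c:ℂ)*((c:ℂ)*((u:ℂ) + (v:ℂ)*Complex.I)^2
          + ((d:ℂ)-(a:ℂ))*((u:ℂ) + (v:ℂ)*Complex.I) - (b:ℂ)) = 0 := by
        linear_combination (2*(c:ℂ)*(u:ℂ) - ((a:ℂ)-(d:ℂ)) + 4*(c:ℂ)*(v:ℂ)*Complex.I) * huC
          + (4*(c:ℂ)^2*(v:ℂ)^2) * hI2 + (-1 : ℂ) * hvC + 4 * hdetC
      have he_root : (c:ℂ)*((u:ℂ) + (v:ℂ)*Complex.I)^2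
          + ((d:ℂ)-(a:ℂ))*((u:ℂ) + (v:ℂ)*Complex.I) - (b:ℂ) = 0 := by
        have h4c : (4:ℂ)*(c:ℂ) ≠ 0 := by
          simp [hcC]
        exact (mul_eq_zero.mp he4).resolve_left h4c
      have hepos : (0:ℝ) < ((u:ℂ) + (v:ℂ)*Complex.I).im := by simpa using hv0
      set e : ℍ := ⟨(u:ℂ) + (v:ℂ)*Complex.I, hepos⟩ with he_def
      have hec : (e:ℂ) = (u:ℂ) + (v:ℂ)*Complex.I := rfl
      have hime : e.im = v := by
        show ((u:ℂ) + (v:ℂ)*Complex.I).im = v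
        simp
      have hfix : γ • e = e := by
        apply fixed_of_root γ e
        rw [← hA, ← hB, ← hC, ← hD', hec]
        exact he_root
      have hell : IsEllipticPoint e := ⟨γ, hγ1, hγn1, hfix⟩
      have hdist : δ < dist z e := hbulk e hell
      -- sinh bound for |z - e|
      have hsh := UpperHalfPlane.sinh_half_dist z e
      have hsqrtpos : 0 < Real.sqrt (z.im*v) := Real.sqrt_pos.mpr (by positivity)
      have hsq : Real.sqrt (z.im*v)^2 = z.im*v := Real.sq_sqrt (by positivity)
      have hs2 : 0 < Real.sinh (δ/2) := Real.sinh_pos_iff.mpr (by positivity)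
      have hA1 : 2*Real.sqrt (z.im*v)*Real.sinh (δ/2) < ‖(z:ℂ) - ((u:ℂ) + (v:ℂ)*Complex.I)‖ := by
        have hlt : Real.sinh (δ/2) < Real.sinh (dist z e / 2) :=
          Real.sinh_lt_sinh.mpr (by linarith)
        rw [hsh, hime, Complex.dist_eq, hec] at hlt
        rw [lt_div_iff₀ (by positivity)] at hlt
        linarith
      have hB1 : 2*Real.sqrt (z.im*v) ≤ ‖(z:ℂ) - ((u:ℂ) - (v:ℂ)*Complex.I)‖ := by
        have him' : ((z:ℂ) - ((u:ℂ) - (v:ℂ)*Complex.I)).im = z.im + v := by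
          simp [Complex.sub_im, UpperHalfPlane.coe_im]
        have h1 : z.im + v ≤ ‖(z:ℂ) - ((u:ℂ) - (v:ℂ)*Complex.I)‖ := by
          have := Complex.abs_im_le_norm ((z:ℂ) - ((u:ℂ) - (v:ℂ)*Complex.I))
          rw [him'] at this
          calc z.im + v = |z.im + v| := (abs_of_pos (by positivity)).symm
            _ ≤ _ := this
        have h2 : 2*Real.sqrt (z.im*v) ≤ z.im + v := by
          nlinarith [sq_nonneg (Real.sqrt z.im - Real.sqrt v), Real.sq_sqrt (le_of_lt hy0),
            Real.sq_sqrt (le_of_lt hv0), Real.sqrt_mul_self (le_of_lt hy0),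
            Real.sqrt_mul (le_of_lt hy0) v, Real.sqrt_nonneg z.im, Real.sqrt_nonneg v]
        linarith
      have hfac : Q = (c:ℂ) * ((z:ℂ) - ((u:ℂ) + (v:ℂ)*Complex.I))
          * ((z:ℂ) - ((u:ℂ) - (v:ℂ)*Complex.I)) := by
        rw [hQ]
        linear_combination he_root + ((z:ℂ) - ((u:ℂ) + (v:ℂ)*Complex.I)) * huC
      have habsQ : ‖Q‖ = |(c:ℝ)| * (‖(z:ℂ) - ((u:ℂ) + (v:ℂ)*Complex.I)‖
          * ‖(z:ℂ) - ((u:ℂ) - (v:ℂ)*Complex.I)‖) := by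
        rw [hfac, norm_mul, norm_mul, Complex.norm_intCast, mul_assoc]
      have hApos : 0 < ‖(z:ℂ) - ((u:ℂ) + (v:ℂ)*Complex.I)‖ :=
        lt_trans (by positivity) hA1
      have hprod : 4*z.im*v*Real.sinh (δ/2)
          < ‖(z:ℂ) - ((u:ℂ) + (v:ℂ)*Complex.I)‖
            * ‖(z:ℂ) - ((u:ℂ) - (v:ℂ)*Complex.I)‖ := by
        nlinarith [hA1, hB1, hApos, hsqrtpos, hs2, hsq,
          mul_pos (mul_pos (by norm_num : (0:ℝ) < 2) hsqrtpos) hs2]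
      have h2cv : 2 * |(c:ℝ)| * v = Real.sqrt (4 - ((a:ℝ)+(d:ℝ))^2) := by
        rw [hv]; field_simp
      have hsqrtE1 : (1:ℝ) ≤ Real.sqrt (4 - ((a:ℝ)+(d:ℝ))^2) := by
        rw [show (1:ℝ) = Real.sqrt 1 by simp]
        exact Real.sqrt_le_sqrt (by linarith)
      have hcv1 : (1:ℝ) ≤ 2 * |(c:ℝ)| * v := by rw [h2cv]; exact hsqrtE1
      have hsinh88 : Real.sinh (δ/(8*Y)) ≤ Real.sinh (δ/2) := by
        apply Real.sinh_le_sinh.mpr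
        rw [div_le_div_iff₀ (by positivity) (by norm_num)]
        nlinarith
      rw [lt_div_iff₀ (by positivity : (0:ℝ) < 2*z.im)]
      calc Real.sinh (δ/(8*Y)) * (2*z.im) ≤ Real.sinh (δ/2) * (2*z.im) := by
            apply mul_le_mul_of_nonneg_right hsinh88 (by positivity)
        _ ≤ (2 * |(c:ℝ)| * v) * Real.sinh (δ/2) * (2*z.im) := by
            nlinarith [mul_nonneg (mul_nonneg (sub_nonneg.mpr hcv1) hs2.le)
              (by positivity : (0:ℝ) ≤ 2*z.im)]
        _ = |(c:ℝ)| * (4*z.im*v*Real.sinh (δ/2)) := by ring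
        _ < ‖Q‖ := by
            rw [habsQ]
            apply mul_lt_mul_of_pos_left hprod hcabs
end
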